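/- Suppose p : (0,∞) → (0,∞) is differentiable and satisfies both p(b) = b·p(1/b) for all b > 0 and p'(b) = p'(1/b) for all b > 0. Then p(b) = α(b+1) for some constant α > 0. -/

import Mathlib

theorem stmt_15 (p : ℝ → ℝ)
    (hdiff : ∀ b : ℝ, 0 < b → DifferentiableAt ℝ p b)
    (hpos : ∀ b : ℝ, 0 < b → 0 < p b)
    (h1 : ∀ b : ℝ, 0 < b → p b = b * p b⁻¹)
    (h2 : ∀ b : ℝ, 0 < b → deriv p b = deriv p b⁻¹) :
    ∃ α : ℝ, 0 < α ∧ ∀ b : ℝ, 0 < b → p b = α * (b + 1) := by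
  -- key: p'(b) * (b+1) = p(b) for b > 0
  have key : ∀ b : ℝ, 0 < b → deriv p b * (b + 1) = p b := by
    intro b hb
    have hbinv : 0 < b⁻¹ := inv_pos.2 hb
    -- deriv of b ↦ b * p b⁻¹ at b
    have hp' : HasDerivAt p (deriv p b⁻¹) b⁻¹ := (hdiff _ hbinv).hasDerivAt
    have hinv : HasDerivAt (fun x : ℝ => x⁻¹) (-(b^2)⁻¹) b := by
      simpa using (hasDerivAt_inv (ne_of_gt hb))
    have hcomp : HasDerivAt (fun x : ℝ => p x⁻¹) (deriv p b⁻¹ * (-(b^2)⁻¹)) b :=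
      hp'.comp b hinv
    have hg : HasDerivAt (fun x : ℝ => x * p x⁻¹)
        (1 * p b⁻¹ + b * (deriv p b⁻¹ * (-(b^2)⁻¹))) b :=
      (hasDerivAt_id b).mul hcomp
    have heq : (fun x : ℝ => x * p x⁻¹) =ᶠ[nhds b] p := by
      filter_upwards [Ioi_mem_nhds hb] with x hx
      exact (h1 x hx).symm
    have hderiv : deriv p b = 1 * p b⁻¹ + b * (deriv p b⁻¹ * (-(b^2)⁻¹)) := by
      rw [← (hg.congr_of_eventuallyEq heq.symm).deriv]
    rw [← h2 b hb] at hderiv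
    have hpb : p b⁻¹ = p b / b := by
      rw [h1 b hb]; field_simp
    rw [hpb] at hderiv
    have hb0 : b ≠ 0 := ne_of_gt hb
    have hb2 : (b:ℝ)^2 ≠ 0 := pow_ne_zero _ hb0
    have h3 : (deriv p b * (b + 1) - p b) * b⁻¹ * b^2 = 0 := by
      field_simp at hderiv ⊢
      ring_nf
      ring_nf at hderiv
      linear_combination b * hderiv
    have h4 := (mul_eq_zero.1 h3).resolve_right hb2
    have h5 := (mul_eq_zero.1 h4).resolve_right (inv_ne_zero hb0)
    linarith
  -- q = p/(b+1) has zero derivative on Ioi 0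
  set q : ℝ → ℝ := fun b => p b / (b + 1) with hq
  have hqd : ∀ b : ℝ, 0 < b → HasDerivAt q 0 b := by
    intro b hb
    have hb1 : b + 1 ≠ 0 := by positivity
    have : HasDerivAt q ((deriv p b * (b + 1) - p b * 1) / (b + 1)^2) b :=
      ((hdiff b hb).hasDerivAt).div ((hasDerivAt_id b).add_const 1) hb1
    simpa [key b hb] using this
  have hconst : ∀ b : ℝ, 0 < b → q b = q 1 := by
    intro b hb
    have := (convex_Ioi (0:ℝ)).is_const_of_fderivWithin_eq_zero
      (f := q) (fun x hx => ((hqd x hx).differentiableAt).differentiableWithinAt)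
      (fun x hx => ?_) hb (by norm_num : (1:ℝ) ∈ Set.Ioi 0)
    · exact this
    · have h0 : fderiv ℝ q x = 0 := by
        have := (hqd x hx).deriv
        ext
        simp only [ContinuousLinearMap.zero_apply]
        rw [← toSpanSingleton_deriv ]
        simp [this]
      rw [fderivWithin_of_isOpen isOpen_Ioi hx, h0]
  refine ⟨p 1 / 2, by have := hpos 1 one_pos; positivity, fun b hb => ?_⟩
  have := hconst b hb
  simp only [hq] at this
  have hb1 : b + 1 ≠ 0 := by positivity
  field_simp at this
  linarith [this]
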